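/- Expected Shortfall is sub-additive: for integrable random variables X, Y on a common probability space and any α ∈ (0,1], ES_α(X+Y) ≤ ES_α(X) + ES_α(Y). -/

import Mathlib

open MeasureTheory

/-- The generalized inverse (lower quantile function) of the CDF of `X`. -/
noncomputable def qf {Ω : Type*} [MeasurableSpace Ω] (μ : Measure Ω) (X : Ω → ℝ) (p : ℝ) : ℝ :=
  sInf {x | p ≤ (μ {ω | X ω ≤ x}).toReal}

/-- Expected Shortfall at level `α`. -/
noncomputable def ES {Ω : Type*} [MeasurableSpace Ω] (μ : Measure Ω) (X : Ω → ℝ) (α : ℝ) : ℝ :=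
  -(1/α) * ∫ p in Set.Ioc (0:ℝ) α, qf μ X p

open Set Filter Topology
open scoped ENNReal
set_option linter.unusedSectionVars false
set_option linter.unusedVariables false
set_option linter.unusedTactic false

namespace ESAux

variable {Ω : Type*} [MeasurableSpace Ω] (μ : Measure Ω) (X : Ω → ℝ)

/-- cdf -/
noncomputable def F (x : ℝ) : ℝ := (μ {ω | X ω ≤ x}).toReal

variable {μ X}

lemma qf_eq (p : ℝ) : qf μ X p = sInf {x | p ≤ F μ X x} := rfl

section basic

variable [IsProbabilityMeasure μ]

lemma F_mono : Monotone (F μ X) := fun a b hab =>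
  ENNReal.toReal_mono (measure_ne_top _ _)
    (measure_mono fun ω (h : X ω ≤ a) => le_trans h hab)

lemma F_nonneg (x : ℝ) : 0 ≤ F μ X x := ENNReal.toReal_nonneg

lemma F_le_one (x : ℝ) : F μ X x ≤ 1 := by
  rw [F, show (1:ℝ) = (1:ENNReal).toReal by simp]
  exact ENNReal.toReal_mono ENNReal.one_ne_top prob_le_one

lemma ofReal_F (x : ℝ) : ENNReal.ofReal (F μ X x) = μ {ω | X ω ≤ x} :=
  ENNReal.ofReal_toReal (measure_ne_top _ _)

variable (hXm : Measurable X)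
include hXm

/-- right continuity of the cdf along `y + 1/(n+1)` -/
lemma F_tendsto_right (y : ℝ) :
    Tendsto (fun n : ℕ => F μ X (y + 1/(n+1))) atTop (𝓝 (F μ X y)) := by
  have h1 : Tendsto (fun n : ℕ => μ {ω | X ω ≤ y + 1/(n+1)}) atTop (𝓝 (μ {ω | X ω ≤ y})) := by
    have h2 : ⋂ n : ℕ, {ω | X ω ≤ y + 1/(n+1)} = {ω | X ω ≤ y} := by
      ext ω
      simp only [mem_iInter, mem_setOf_eq]
      constructor
      · intro h
        by_contra hc
        push_neg at hc
        obtain ⟨n, hn⟩ := exists_nat_one_div_lt (sub_pos.mpr hc)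
        exact absurd (h n) (by push_cast; linarith)
      · intro h n
        have : (0:ℝ) < 1/(n+1) := by positivity
        linarith
    rw [← h2]
    refine tendsto_measure_iInter_atTop
      (fun n => (hXm measurableSet_Iic).nullMeasurableSet) ?_ ⟨0, measure_ne_top _ _⟩
    intro a b hab
    refine fun ω (h : X ω ≤ _) => le_trans h ?_
    have : (1:ℝ)/(b+1) ≤ 1/(a+1) := by
      apply one_div_le_one_div_of_le (by positivity)
      exact_mod_cast by omega
    linarith
  exact (ENNReal.tendsto_toReal (measure_ne_top _ _)).comp h1

/-- left limit: `μ {X < y}` as a supremum -/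
lemma measure_lt_eq_iSup (y : ℝ) :
    μ {ω | X ω < y} = ⨆ n : ℕ, μ {ω | X ω ≤ y - 1/(n+1)} := by
  have h2 : ⋃ n : ℕ, {ω | X ω ≤ y - 1/(n+1)} = {ω | X ω < y} := by
    ext ω
    simp only [mem_iUnion, mem_setOf_eq]
    constructor
    · rintro ⟨n, hn⟩
      have : (0:ℝ) < 1/(n+1) := by positivity
      linarith
    · intro h
      obtain ⟨n, hn⟩ := exists_nat_one_div_lt (sub_pos.mpr h)
      exact ⟨n, by push_cast at hn ⊢; linarith⟩
  rw [← h2]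
  refine Monotone.measure_iUnion fun a b hab => ?_
  refine fun ω (h : X ω ≤ _) => le_trans h ?_
  have : (1:ℝ)/(b+1) ≤ 1/(a+1) := by
    apply one_div_le_one_div_of_le (by positivity)
    exact_mod_cast by omega
  linarith

lemma exists_F_lt {p : ℝ} (hp : 0 < p) : ∃ b : ℝ, F μ X b < p := by
  have h2 : ⋂ n : ℕ, {ω | X ω ≤ -(n:ℝ)} = (∅ : Set Ω) := by
    ext ω
    simp only [mem_iInter, mem_setOf_eq, mem_empty_iff_false, iff_false]
    push_neg
    obtain ⟨n, hn⟩ := exists_nat_gt (-(X ω))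
    exact ⟨n, by linarith⟩
  have h1 : Tendsto (fun n : ℕ => μ {ω | X ω ≤ -(n:ℝ)}) atTop (𝓝 0) := by
    have := tendsto_measure_iInter_atTop (μ := μ) (s := fun n : ℕ => {ω | X ω ≤ -(n:ℝ)})
      (fun n : ℕ => (hXm measurableSet_Iic).nullMeasurableSet)
      (fun a b hab => fun ω (h : X ω ≤ _) => le_trans h (by exact_mod_cast neg_le_neg (Nat.cast_le.mpr hab)))
      ⟨0, measure_ne_top _ _⟩
    rwa [h2, measure_empty] at this
  have h3 : Tendsto (fun n : ℕ => F μ X (-(n:ℝ))) atTop (𝓝 0) := by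
    have := (ENNReal.tendsto_toReal (by simp)).comp h1
    simpa [F, Function.comp_def] using this
  have := (h3.eventually (eventually_lt_nhds hp)).exists
  obtain ⟨n, hn⟩ := this
  exact ⟨-(n:ℝ), hn⟩

lemma bddBelow_S {p : ℝ} (hp : 0 < p) : BddBelow {x | p ≤ F μ X x} := by
  obtain ⟨b, hb⟩ := exists_F_lt (μ:=μ) (X:=X) hXm hp
  exact ⟨b, fun x hx => by
    by_contra hc
    push_neg at hc
    exact absurd (le_trans hx (F_mono (μ:=μ) (X:=X) hc.le)) (not_le.mpr hb)⟩

lemma nonempty_S {p : ℝ} (hp : p < 1) : {x | p ≤ F μ X x}.Nonempty := by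
  have h2 : ⋃ n : ℕ, {ω | X ω ≤ (n:ℝ)} = (univ : Set Ω) := by
    ext ω
    simp only [mem_iUnion, mem_setOf_eq, mem_univ, iff_true]
    obtain ⟨n, hn⟩ := exists_nat_gt (X ω)
    exact ⟨n, hn.le⟩
  have h1 : Tendsto (fun n : ℕ => μ {ω | X ω ≤ (n:ℝ)}) atTop (𝓝 1) := by
    have := tendsto_measure_iUnion_atTop (μ := μ) (s := fun n : ℕ => {ω | X ω ≤ (n:ℝ)})
      (fun a b hab => fun ω (h : X ω ≤ _) => le_trans h (Nat.cast_le.mpr hab))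
    rwa [h2, measure_univ] at this
  have h3 : Tendsto (fun n : ℕ => F μ X (n:ℝ)) atTop (𝓝 1) := by
    have := (ENNReal.tendsto_toReal (by simp)).comp h1
    simpa [F, Function.comp_def] using this
  have := (h3.eventually (eventually_gt_nhds hp)).exists
  obtain ⟨n, hn⟩ := this
  exact ⟨(n:ℝ), hn.le⟩

end basic
section galois

variable [IsProbabilityMeasure μ] (hXm : Measurable X)
include hXm

lemma qf_le_of_le_F {p x : ℝ} (hp : 0 < p) (h : p ≤ F μ X x) : qf μ X p ≤ x :=
  csInf_le (bddBelow_S hXm hp) h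

lemma le_F_of_qf_le {p y : ℝ} (hp : 0 < p) (hp1 : p < 1) (h : qf μ X p ≤ y) :
    p ≤ F μ X y := by
  have key : ∀ n : ℕ, p ≤ F μ X (y + 1/(n+1)) := by
    intro n
    have hpos : (0:ℝ) < 1/(n+1) := by positivity
    have hlt : sInf {x | p ≤ F μ X x} < y + 1/(n+1) := lt_of_le_of_lt h (by linarith)
    obtain ⟨x, hx, hxy⟩ := (csInf_lt_iff (bddBelow_S hXm hp) (nonempty_S hXm hp1)).mp hlt
    exact hx.trans (F_mono hxy.le)
  exact ge_of_tendsto' (F_tendsto_right hXm y) key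

lemma lt_qf_of_F_lt {p y : ℝ} (hp0 : 0 < p) (hp1 : p < 1) (h : F μ X y < p) :
    y < qf μ X p := by
  by_contra hc
  push_neg at hc
  exact absurd (le_F_of_qf_le hXm hp0 hp1 hc) (not_le.mpr h)

lemma F_lt_of_lt_qf {p y : ℝ} (hp0 : 0 < p) (h : y < qf μ X p) : F μ X y < p := by
  by_contra hc
  push_neg at hc
  exact absurd (qf_le_of_le_F hXm hp0 hc) (not_le.mpr h)

lemma qf_mono {p p' : ℝ} (hp : 0 < p) (hpp : p ≤ p') (hp1 : p' < 1) :
    qf μ X p ≤ qf μ X p' :=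
  csInf_le_csInf (bddBelow_S hXm hp) (nonempty_S hXm hp1)
    (fun x hx => le_trans hpp hx)

end galois

end ESAux

open ESAux Real

/-- measurable version of `qf` on `(0,1)` -/
noncomputable def qf' {Ω : Type*} [MeasurableSpace Ω] (μ : Measure Ω) (X : Ω → ℝ) (p : ℝ) : ℝ :=
  qf μ X (arctan (tan (π * (p - 1/2))) / π + 1/2)

namespace ESAux

variable {Ω : Type*} [MeasurableSpace Ω] {μ : Measure Ω} {X : Ω → ℝ}

lemma arctan_aux (t : ℝ) : arctan t / π + 1/2 ∈ Ioo (0:ℝ) 1 := by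
  have h1 := Real.arctan_lt_pi_div_two t
  have h2 := Real.neg_pi_div_two_lt_arctan t
  have hπ := Real.pi_pos
  have h3 : -(π/2)/π < arctan t / π := by
    rw [div_lt_div_iff_of_pos_right hπ]; exact h2
  have h4 : arctan t / π < (π/2)/π := by
    rw [div_lt_div_iff_of_pos_right hπ]; exact h1
  have h5 : -(π/2)/π = -(1/2 : ℝ) := by field_simp
  have h6 : (π/2)/π = (1/2 : ℝ) := by field_simp
  rw [h5] at h3; rw [h6] at h4
  constructor <;> [linarith; linarith]

variable [IsProbabilityMeasure μ]

lemma qf'_eq_qf (hXm : Measurable X) {p : ℝ} (hp : p ∈ Ioo (0:ℝ) 1) :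
    qf' μ X p = qf μ X p := by
  have hπ := Real.pi_pos
  have h1 : -(π/2) < π * (p - 1/2) := by nlinarith [hp.1, hp.2]
  have h2 : π * (p - 1/2) < π/2 := by nlinarith [hp.1, hp.2]
  rw [qf', Real.arctan_tan h1 h2]
  congr 1
  field_simp
  ring

lemma qf'_one : qf' μ X 1 = qf μ X (1/2) := by
  have h : π * ((1:ℝ) - 1/2) = π/2 := by ring
  rw [qf', h, Real.tan_pi_div_two, Real.arctan_zero]
  norm_num

lemma measurable_tan' : Measurable Real.tan := by
  have : Real.tan = fun x => Real.sin x / Real.cos x := by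
    funext x; exact Real.tan_eq_sin_div_cos x
  rw [this]
  exact Real.measurable_sin.div Real.measurable_cos

lemma qf'_measurable (hXm : Measurable X) : Measurable (qf' μ X) := by
  have hm : Monotone (fun t : ℝ => qf μ X (arctan t / π + 1/2)) := by
    intro s t hst
    exact qf_mono hXm (arctan_aux s).1
      (by
        have := Real.arctan_strictMono.monotone hst
        have hπ := Real.pi_pos
        gcongr)
      (arctan_aux t).2
  exact hm.measurable.comp
    (measurable_tan'.comp ((measurable_id.sub_const _).const_mul π))
variable (hXm : Measurable X)
include hXm

lemma vol_lower (y : ℝ) :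
    volume {p : ℝ | p ∈ Ioc (0:ℝ) 1 ∧ qf' μ X p < y} = μ {ω | X ω < y} := by
  set A := {p : ℝ | p ∈ Ioc (0:ℝ) 1 ∧ qf' μ X p < y} with hA
  set e : ℕ → ℝ := fun n => F μ X (y - 1/(n+1)) with he
  have he_mono : Monotone e := by
    intro a b hab
    apply F_mono
    have : (1:ℝ)/(b+1) ≤ 1/(a+1) := by
      apply one_div_le_one_div_of_le (by positivity)
      exact_mod_cast by omega
    linarith
  have hvol : ∀ s : ℕ → Set ℝ, Monotone s → (∀ n, volume (s n) = ENNReal.ofReal (e n)) →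
      volume (⋃ n, s n) = μ {ω | X ω < y} := by
    intro s hs hv
    rw [Monotone.measure_iUnion hs, measure_lt_eq_iSup hXm]
    congr 1
    funext n
    rw [hv n, ofReal_F]
  have hsub1 : ∀ n, Ioo (0:ℝ) (e n) ⊆ A := by
    intro n p hp
    have hpos : (0:ℝ) < 1/(n+1) := by positivity
    have hp1 : p < 1 := lt_of_lt_of_le hp.2 (F_le_one _)
    have hqf : qf μ X p ≤ y - 1/(n+1) := qf_le_of_le_F hXm hp.1 hp.2.le
    exact ⟨⟨hp.1, hp1.le⟩, by rw [qf'_eq_qf hXm ⟨hp.1, hp1⟩]; linarith⟩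
  have hsub2 : A ⊆ (⋃ n, Ioc 0 (e n)) ∪ {1} := by
    intro p hp
    rcases eq_or_lt_of_le hp.1.2 with h1 | h1
    · exact Or.inr (by simp [h1])
    · left
      have hq : qf μ X p < y := by rw [← qf'_eq_qf hXm ⟨hp.1.1, h1⟩]; exact hp.2
      obtain ⟨x, hx, hxy⟩ := (csInf_lt_iff (bddBelow_S hXm hp.1.1)
        (nonempty_S hXm h1)).mp hq
      obtain ⟨n, hn⟩ := exists_nat_one_div_lt (sub_pos.mpr hxy)
      refine mem_iUnion.mpr ⟨n, hp.1.1, hx.trans (F_mono ?_)⟩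
      push_cast at hn ⊢
      linarith
  apply le_antisymm
  · calc volume A ≤ volume ((⋃ n, Ioc 0 (e n)) ∪ {1}) := measure_mono hsub2
      _ ≤ volume (⋃ n, Ioc 0 (e n)) + volume ({1} : Set ℝ) := measure_union_le _ _
      _ = μ {ω | X ω < y} := by
          rw [Real.volume_singleton, add_zero]
          apply hvol _ (fun a b hab => Ioc_subset_Ioc_right (he_mono hab))
          intro n
          rw [Real.volume_Ioc, sub_zero]
  · calc μ {ω | X ω < y} = volume (⋃ n, Ioo 0 (e n)) := by
          rw [hvol _ (fun a b hab => Ioo_subset_Ioo_right (he_mono hab))]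
          intro n
          rw [Real.volume_Ioo, sub_zero]
      _ ≤ volume A := measure_mono (iUnion_subset hsub1)

lemma vol_upper (y : ℝ) :
    volume {p : ℝ | p ∈ Ioc (0:ℝ) 1 ∧ y < qf' μ X p} = μ {ω | y < X ω} := by
  set A := {p : ℝ | p ∈ Ioc (0:ℝ) 1 ∧ y < qf' μ X p} with hA
  have hsub1 : Ioo (F μ X y) 1 ⊆ A := by
    intro p hp
    have hp0 : 0 < p := lt_of_le_of_lt (F_nonneg y) hp.1
    refine ⟨⟨hp0, hp.2.le⟩, ?_⟩
    rw [qf'_eq_qf hXm ⟨hp0, hp.2⟩]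
    exact lt_qf_of_F_lt hXm hp0 hp.2 hp.1
  have hsub2 : A ⊆ Ioc (F μ X y) 1 := by
    intro p hp
    refine ⟨?_, hp.1.2⟩
    rcases eq_or_lt_of_le hp.1.2 with h1 | h1
    · -- p = 1
      have hq : y < qf μ X (1/2) := by
        rw [← qf'_one (μ := μ) (X := X)]
        exact h1 ▸ hp.2
      have := F_lt_of_lt_qf hXm (by norm_num : (0:ℝ) < 1/2) hq
      rw [h1]
      linarith
    · have hq : y < qf μ X p := by rw [← qf'_eq_qf hXm ⟨hp.1.1, h1⟩]; exact hp.2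
      exact F_lt_of_lt_qf hXm hp.1.1 hq
  have hcompl : {ω | y < X ω} = {ω | X ω ≤ y}ᶜ := by
    ext ω; simp [not_le]
  have hμ : μ {ω | y < X ω} = 1 - μ {ω | X ω ≤ y} := by
    rw [hcompl, measure_compl (show MeasurableSet {ω | X ω ≤ y} from hXm measurableSet_Iic) (measure_ne_top _ _), measure_univ]
  have hval : ENNReal.ofReal (1 - F μ X y) = μ {ω | y < X ω} := by
    rw [hμ, ENNReal.ofReal_sub _ (F_nonneg y), ENNReal.ofReal_one, ofReal_F]
  apply le_antisymm
  · calc volume A ≤ volume (Ioc (F μ X y) 1) := measure_mono hsub2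
      _ = μ {ω | y < X ω} := by rw [Real.volume_Ioc, hval]
  · calc μ {ω | y < X ω} = volume (Ioo (F μ X y) 1) := by rw [Real.volume_Ioo, hval]
      _ ≤ volume A := measure_mono hsub1

omit hXm in
lemma ofReal_max0 (a : ℝ) : ENNReal.ofReal (max a 0) = ENNReal.ofReal a := by
  rcases le_total a 0 with h | h
  · rw [max_eq_right h, ENNReal.ofReal_of_nonpos h, ENNReal.ofReal_zero]
  · rw [max_eq_left h]

omit hXm in
lemma lint_ofReal_eq_meas_lt {β : Type*} [MeasurableSpace β] (ν : Measure β)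
    (f : β → ℝ) (hf : AEMeasurable f ν) :
    ∫⁻ b, ENNReal.ofReal (f b) ∂ν = ∫⁻ t in Ioi (0:ℝ), ν {b | t < f b} := by
  have h1 : ∫⁻ b, ENNReal.ofReal (f b) ∂ν = ∫⁻ b, ENNReal.ofReal (max (f b) 0) ∂ν := by
    apply lintegral_congr
    intro b
    rw [ofReal_max0]
  rw [h1, lintegral_eq_lintegral_meas_lt (f := fun b => max (f b) 0) ν
    (ae_of_all _ fun b => le_max_right _ _) (hf.max aemeasurable_const)]
  apply setLIntegral_congr_fun measurableSet_Ioi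
  intro t ht
  dsimp only
  congr 1
  ext b
  simp only [mem_setOf_eq]
  constructor
  · intro h
    rcases le_total (f b) 0 with h2 | h2
    · exact absurd h (by rw [max_eq_right h2]; exact not_lt.mpr ht.le)
    · rwa [max_eq_left h2] at h
  · intro h
    exact lt_of_lt_of_le h (le_max_left _ _)

lemma L_lower (q : ℝ) :
    ∫⁻ p in Ioc (0:ℝ) 1, ENNReal.ofReal (q - qf' μ X p) =
      ∫⁻ ω, ENNReal.ofReal (q - X ω) ∂μ := by
  rw [lint_ofReal_eq_meas_lt (volume.restrict (Ioc (0:ℝ) 1)) (fun p => q - qf' μ X p)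
    ((measurable_const.sub (qf'_measurable hXm)).aemeasurable),
    lint_ofReal_eq_meas_lt μ (fun ω => q - X ω) ((measurable_const.sub hXm).aemeasurable)]
  apply setLIntegral_congr_fun measurableSet_Ioi ?_
  intro t ht
  dsimp only
  have hms : MeasurableSet {p : ℝ | t < q - qf' μ X p} :=
    measurableSet_lt measurable_const (measurable_const.sub (qf'_measurable hXm))
  rw [Measure.restrict_apply hms]
  have hseq : {p : ℝ | t < q - qf' μ X p} ∩ Ioc 0 1
      = {p : ℝ | p ∈ Ioc (0:ℝ) 1 ∧ qf' μ X p < q - t} := by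
    ext p
    simp only [mem_inter_iff, mem_setOf_eq]
    constructor
    · rintro ⟨h1, h2⟩; exact ⟨h2, by linarith⟩
    · rintro ⟨h1, h2⟩; exact ⟨by linarith, h1⟩
  rw [hseq, vol_lower hXm]
  congr 1
  ext ω
  simp only [mem_setOf_eq]
  constructor <;> (intro h; linarith)

lemma L_upper (q : ℝ) :
    ∫⁻ p in Ioc (0:ℝ) 1, ENNReal.ofReal (qf' μ X p - q) =
      ∫⁻ ω, ENNReal.ofReal (X ω - q) ∂μ := by
  rw [lint_ofReal_eq_meas_lt (volume.restrict (Ioc (0:ℝ) 1)) (fun p => qf' μ X p - q)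
    (((qf'_measurable hXm).sub measurable_const).aemeasurable),
    lint_ofReal_eq_meas_lt μ (fun ω => X ω - q) ((hXm.sub measurable_const).aemeasurable)]
  apply setLIntegral_congr_fun measurableSet_Ioi ?_
  intro t ht
  dsimp only
  have hms : MeasurableSet {p : ℝ | t < qf' μ X p - q} :=
    measurableSet_lt measurable_const ((qf'_measurable hXm).sub measurable_const)
  rw [Measure.restrict_apply hms]
  have hseq : {p : ℝ | t < qf' μ X p - q} ∩ Ioc 0 1
      = {p : ℝ | p ∈ Ioc (0:ℝ) 1 ∧ (q + t) < qf' μ X p} := by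
    ext p
    simp only [mem_inter_iff, mem_setOf_eq]
    constructor
    · rintro ⟨h1, h2⟩; exact ⟨h2, by linarith⟩
    · rintro ⟨h1, h2⟩; exact ⟨by linarith, h1⟩
  rw [hseq, vol_upper hXm]
  congr 1
  ext ω
  simp only [mem_setOf_eq]
  constructor <;> (intro h; linarith)

omit hXm in
lemma ofReal_abs' (a : ℝ) :
    ENNReal.ofReal |a| = ENNReal.ofReal a + ENNReal.ofReal (-a) := by
  rcases le_total 0 a with h | h
  · rw [abs_of_nonneg h, show ENNReal.ofReal (-a) = 0 from ENNReal.ofReal_of_nonpos (by linarith), add_zero]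
  · rw [abs_of_nonpos h, ENNReal.ofReal_of_nonpos h, zero_add]

lemma integrable_qf' (hX : Integrable X μ) :
    IntegrableOn (qf' μ X) (Ioc (0:ℝ) 1) := by
  constructor
  · exact (qf'_measurable hXm).aestronglyMeasurable
  · rw [hasFiniteIntegral_iff_norm]
    have key : ∫⁻ p in Ioc (0:ℝ) 1, ENNReal.ofReal ‖qf' μ X p‖
        = (∫⁻ ω, ENNReal.ofReal (X ω) ∂μ) + ∫⁻ ω, ENNReal.ofReal (-X ω) ∂μ := by
      have h1 : ∀ p : ℝ, ENNReal.ofReal ‖qf' μ X p‖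
          = ENNReal.ofReal (qf' μ X p - 0) + ENNReal.ofReal (0 - qf' μ X p) := by
        intro p
        rw [sub_zero, zero_sub, Real.norm_eq_abs, ofReal_abs']
      rw [lintegral_congr h1, lintegral_add_left
        (by exact (ENNReal.measurable_ofReal.comp ((qf'_measurable hXm).sub measurable_const)))]
      rw [L_upper hXm 0, L_lower hXm 0]
      congr 1
      · apply lintegral_congr; intro ω; rw [sub_zero]
      · apply lintegral_congr; intro ω; rw [zero_sub]
    rw [key]
    have hX1 := hX.hasFiniteIntegral
    rw [hasFiniteIntegral_iff_norm] at hX1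
    have h2 : (∫⁻ ω, ENNReal.ofReal (X ω) ∂μ) + ∫⁻ ω, ENNReal.ofReal (-X ω) ∂μ
        = ∫⁻ ω, ENNReal.ofReal ‖X ω‖ ∂μ := by
      rw [← lintegral_add_left (by exact ENNReal.measurable_ofReal.comp hXm |>.mono le_rfl le_rfl)]
      · apply lintegral_congr; intro ω; rw [Real.norm_eq_abs, ofReal_abs']
    rw [h2]
    exact hX1

lemma Rlow (hX : Integrable X μ) (q : ℝ) :
    ∫ p in Ioc (0:ℝ) 1, max (q - qf' μ X p) 0 = ∫ ω, max (q - X ω) 0 ∂μ := by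
  rw [integral_eq_lintegral_of_nonneg_ae (f := fun p => max (q - qf' μ X p) 0)
      (ae_of_all _ fun p => le_max_right _ _)
      ((measurable_const.sub (qf'_measurable hXm)).max measurable_const).aestronglyMeasurable.restrict,
    integral_eq_lintegral_of_nonneg_ae (f := fun ω => max (q - X ω) 0)
      (ae_of_all _ fun ω => le_max_right _ _)
      ((measurable_const.sub hXm).max measurable_const).aestronglyMeasurable]
  congr 1
  rw [lintegral_congr (fun p => ofReal_max0 (q - qf' μ X p)),
    lintegral_congr (fun ω => ofReal_max0 (q - X ω))]
  exact L_lower hXm q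

lemma Rupper (hX : Integrable X μ) (q : ℝ) :
    ∫ p in Ioc (0:ℝ) 1, max (qf' μ X p - q) 0 = ∫ ω, max (X ω - q) 0 ∂μ := by
  rw [integral_eq_lintegral_of_nonneg_ae (f := fun p => max (qf' μ X p - q) 0)
      (ae_of_all _ fun p => le_max_right _ _)
      (((qf'_measurable hXm).sub measurable_const).max measurable_const).aestronglyMeasurable.restrict,
    integral_eq_lintegral_of_nonneg_ae (f := fun ω => max (X ω - q) 0)
      (ae_of_all _ fun ω => le_max_right _ _)
      ((hXm.sub measurable_const).max measurable_const).aestronglyMeasurable]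
  congr 1
  rw [lintegral_congr (fun p => ofReal_max0 (qf' μ X p - q)),
    lintegral_congr (fun ω => ofReal_max0 (X ω - q))]
  exact L_upper hXm q

lemma Key1 (hX : Integrable X μ) :
    ∫ p in Ioc (0:ℝ) 1, qf' μ X p = ∫ ω, X ω ∂μ := by
  have hint := integrable_qf' hXm hX
  have hdec : ∀ a : ℝ, a = max (a - 0) 0 - max (0 - a) 0 := by
    intro a
    rcases le_total 0 a with h | h
    · rw [sub_zero, zero_sub, max_eq_left h, max_eq_right (by linarith), sub_zero]
    · rw [sub_zero, zero_sub, max_eq_right h, max_eq_left (by linarith)]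
      ring
  calc ∫ p in Ioc (0:ℝ) 1, qf' μ X p
      = ∫ p in Ioc (0:ℝ) 1, (max (qf' μ X p - 0) 0 - max (0 - qf' μ X p) 0) := by
        apply setIntegral_congr_fun measurableSet_Ioc
        intro p _
        exact hdec _
    _ = (∫ p in Ioc (0:ℝ) 1, max (qf' μ X p - 0) 0)
        - ∫ p in Ioc (0:ℝ) 1, max (0 - qf' μ X p) 0 := by
        apply integral_sub
        · simpa using hint.pos_part
        · simpa using hint.neg.pos_part
    _ = (∫ ω, max (X ω - 0) 0 ∂μ) - ∫ ω, max (0 - X ω) 0 ∂μ := by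
        rw [Rupper hXm hX 0, Rlow hXm hX 0]
    _ = ∫ ω, X ω ∂μ := by
        rw [← integral_sub (by simpa using hX.pos_part) (by simpa using hX.neg.pos_part)]
        apply integral_congr_ae
        apply ae_of_all
        intro ω
        exact (hdec (X ω)).symm

lemma F_q_ge {α : ℝ} (hα : α ∈ Ioo (0:ℝ) 1) : α ≤ F μ X (qf μ X α) :=
  le_F_of_qf_le hXm hα.1 hα.2 le_rfl

lemma measure_lt_q_le {α : ℝ} (hα : α ∈ Ioo (0:ℝ) 1) :
    μ {ω | X ω < qf μ X α} ≤ ENNReal.ofReal α := by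
  set q := qf μ X α with hq
  rw [measure_lt_eq_iSup hXm]
  apply iSup_le
  intro n
  have hpos : (0:ℝ) < 1/(n+1) := by positivity
  have hFlt : F μ X (q - 1/(n+1)) < α := by
    by_contra hc
    push_neg at hc
    have := qf_le_of_le_F hXm hα.1 hc
    rw [← hq] at this
    linarith
  calc μ {ω | X ω ≤ q - 1/(n+1)} = ENNReal.ofReal (F μ X (q - 1/(n+1))) := (ofReal_F _).symm
    _ ≤ ENNReal.ofReal α := ENNReal.ofReal_le_ofReal hFlt.le

lemma Key2 (hX : Integrable X μ) {α : ℝ} (hα : α ∈ Ioo (0:ℝ) 1) :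
    ∫ p in Ioc (0:ℝ) α, qf' μ X p
      = (qf μ X α) * α - ∫ ω, max (qf μ X α - X ω) 0 ∂μ := by
  set q := qf μ X α with hq
  have hg_int1 : IntegrableOn (fun p => max (q - qf' μ X p) 0) (Ioc (0:ℝ) 1) := by
    have := ((integrable_const q).sub (integrable_qf' hXm hX)).pos_part
    simpa [IntegrableOn] using this
  have hg_intα : IntegrableOn (fun p => max (q - qf' μ X p) 0) (Ioc (0:ℝ) α) :=
    hg_int1.mono_set (Ioc_subset_Ioc_right hα.2.le)
  have step1 : ∫ p in Ioc (0:ℝ) α, qf' μ X p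
      = ∫ p in Ioc (0:ℝ) α, (q - max (q - qf' μ X p) 0) := by
    apply setIntegral_congr_fun measurableSet_Ioc
    intro p hp
    have hp1 : p ∈ Ioo (0:ℝ) 1 := ⟨hp.1, lt_of_le_of_lt hp.2 hα.2⟩
    have hle : qf' μ X p ≤ q := by
      rw [qf'_eq_qf hXm hp1, hq]
      exact qf_mono hXm hp.1 hp.2 hα.2
    show qf' μ X p = q - max (q - qf' μ X p) 0
    rw [max_eq_left (by linarith : (0:ℝ) ≤ q - qf' μ X p)]
    ring
  have step2 : ∫ p in Ioc (0:ℝ) α, (q - max (q - qf' μ X p) 0)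
      = q * α - ∫ p in Ioc (0:ℝ) α, max (q - qf' μ X p) 0 := by
    rw [integral_sub (integrableOn_const (C := q) measure_Ioc_lt_top.ne) hg_intα]
    congr 1
    rw [setIntegral_const, measureReal_def, Real.volume_Ioc, smul_eq_mul,
      ENNReal.toReal_ofReal (by linarith [hα.1] : (0:ℝ) ≤ α - 0)]
    ring
  have step3 : ∫ p in Ioc (0:ℝ) α, max (q - qf' μ X p) 0
      = ∫ p in Ioc (0:ℝ) 1, max (q - qf' μ X p) 0 := by
    have hsplit : Ioc (0:ℝ) 1 = Ioc 0 α ∪ Ioc α 1 := (Ioc_union_Ioc_eq_Ioc hα.1.le hα.2.le).symm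
    have hzero : ∫ p in Ioc α 1, max (q - qf' μ X p) 0 = 0 := by
      rw [setIntegral_congr_set (Ioo_ae_eq_Ioc (a := α) (b := 1)).symm]
      rw [setIntegral_congr_fun measurableSet_Ioo (g := fun _ => (0:ℝ))]
      · exact integral_zero _ _
      · intro p hp
        have hge : q ≤ qf' μ X p := by
          rw [qf'_eq_qf hXm ⟨lt_trans hα.1 hp.1, hp.2⟩, hq]
          exact qf_mono hXm hα.1 hp.1.le hp.2
        simp only
        rw [max_eq_right (by linarith)]
    rw [hsplit, setIntegral_union (Ioc_disjoint_Ioc_of_le le_rfl) measurableSet_Ioc hg_intα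
      (hg_int1.mono_set (Ioc_subset_Ioc_left hα.1.le)), hzero, add_zero]
  rw [step1, step2, step3, Rlow hXm hX q]

omit hXm in
lemma integrable_mul_g (hX : Integrable X μ) {g : Ω → ℝ} (hgm : Measurable g)
    (hg : ∀ ω, 0 ≤ g ω ∧ g ω ≤ 1) : Integrable (fun ω => X ω * g ω) μ := by
  apply Integrable.mono hX (hX.aestronglyMeasurable.mul hgm.aestronglyMeasurable)
  apply ae_of_all
  intro ω
  simp only [Pi.mul_apply, Real.norm_eq_abs, abs_mul]
  exact mul_le_of_le_one_right (abs_nonneg _) (abs_le.mpr ⟨by linarith [(hg ω).1], (hg ω).2⟩)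

lemma key_ineq (hX : Integrable X μ) {α : ℝ} (hα : α ∈ Ioo (0:ℝ) 1)
    {g : Ω → ℝ} (hgm : Measurable g) (hg : ∀ ω, 0 ≤ g ω ∧ g ω ≤ 1)
    (hgavg : ∫ ω, g ω ∂μ = α) :
    ∫ p in Ioc (0:ℝ) α, qf' μ X p ≤ ∫ ω, X ω * g ω ∂μ := by
  set r := qf μ X α with hr
  have hg_int : Integrable g μ := by
    apply Integrable.mono (integrable_const (1:ℝ)) hgm.aestronglyMeasurable
    apply ae_of_all
    intro ω
    rw [Real.norm_eq_abs, Real.norm_eq_abs, abs_one]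
    exact abs_le.mpr ⟨by linarith [(hg ω).1], (hg ω).2⟩
  have hmax_int : Integrable (fun ω => max (r - X ω) 0) μ := by
    simpa using ((integrable_const r).sub hX).pos_part
  have hptwise : ∀ ω, r * g ω - max (r - X ω) 0 ≤ X ω * g ω := by
    intro ω
    rcases le_total r (X ω) with h | h
    · have h1 : 0 ≤ (X ω - r) * g ω := mul_nonneg (by linarith) (hg ω).1
      have h2 : (0:ℝ) ≤ max (r - X ω) 0 := le_max_right _ _
      nlinarith
    · rw [max_eq_left (by linarith : (0:ℝ) ≤ r - X ω)]
      nlinarith [mul_nonneg (sub_nonneg.2 h) (sub_nonneg.2 (hg ω).2)]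
  have hmono : ∫ ω, (r * g ω - max (r - X ω) 0) ∂μ ≤ ∫ ω, X ω * g ω ∂μ := by
    apply integral_mono ((hg_int.const_mul r).sub hmax_int)
      (integrable_mul_g hX hgm hg)
    exact hptwise
  calc ∫ p in Ioc (0:ℝ) α, qf' μ X p
      = r * α - ∫ ω, max (r - X ω) 0 ∂μ := Key2 hXm hX hα
    _ = ∫ ω, (r * g ω - max (r - X ω) 0) ∂μ := by
        rw [integral_sub (hg_int.const_mul r) hmax_int, integral_const_mul, hgavg]
    _ ≤ ∫ ω, X ω * g ω ∂μ := hmono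

omit hXm in
lemma integrable_g {g : Ω → ℝ} (hgm : Measurable g)
    (hg : ∀ ω, 0 ≤ g ω ∧ g ω ≤ 1) : Integrable g μ := by
  apply Integrable.mono (integrable_const (1:ℝ)) hgm.aestronglyMeasurable
  apply ae_of_all
  intro ω
  rw [Real.norm_eq_abs, Real.norm_eq_abs, abs_one]
  exact abs_le.mpr ⟨by linarith [(hg ω).1], (hg ω).2⟩

lemma exists_g {α : ℝ} (hα : α ∈ Ioo (0:ℝ) 1) :
    ∃ g : Ω → ℝ, Measurable g ∧ (∀ ω, 0 ≤ g ω ∧ g ω ≤ 1) ∧ (∫ ω, g ω ∂μ = α) ∧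
      (∀ ω, X ω * g ω = qf μ X α * g ω - max (qf μ X α - X ω) 0) := by
  set q := qf μ X α with hq
  set a := (μ {ω | X ω < q}).toReal with ha
  set m := (μ {ω | X ω = q}).toReal with hm
  have hdis : Disjoint {ω | X ω < q} {ω | X ω = q} := by
    rw [Set.disjoint_iff]
    rintro ω ⟨h1, h2⟩
    simp only [mem_setOf_eq] at h1 h2
    exact absurd h2 h1.ne
  have hsplit : μ {ω | X ω ≤ q} = μ {ω | X ω < q} + μ {ω | X ω = q} := by
    rw [← measure_union hdis (show MeasurableSet {ω | X ω = q} from hXm (measurableSet_singleton q))]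
    congr 1
    ext ω
    simp only [mem_union, mem_setOf_eq]
    exact le_iff_lt_or_eq
  have hb : F μ X q = a + m := by
    rw [F, hsplit, ENNReal.toReal_add (measure_ne_top _ _) (measure_ne_top _ _)]
  have ha_le : a ≤ α := by
    have h := measure_lt_q_le (μ:=μ) (X:=X) hXm hα
    exact ENNReal.toReal_le_of_le_ofReal hα.1.le h
  have hb_ge : α ≤ a + m := hb ▸ F_q_ge (μ:=μ) (X:=X) hXm hα
  have hm0 : 0 ≤ m := ENNReal.toReal_nonneg
  set c := (if m = 0 then 0 else (α - a)/m : ℝ) with hc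
  have hmpos : m ≠ 0 → 0 < m := fun h => lt_of_le_of_ne hm0 (Ne.symm h)
  have hc0 : 0 ≤ c := by
    rw [hc]
    split_ifs with h
    · norm_num
    · exact div_nonneg (by linarith) hm0
  have hc1 : c ≤ 1 := by
    rw [hc]
    split_ifs with h
    · norm_num
    · rw [div_le_one (hmpos h)]
      linarith
  have hacm : a + c * m = α := by
    rw [hc]
    split_ifs with h
    · rw [h] at hb_ge ⊢
      ring_nf
      linarith
    · field_simp
      ring
  refine ⟨fun ω => if X ω < q then 1 else if X ω = q then c else 0, ?_, ?_, ?_, ?_⟩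
  · exact Measurable.ite (hXm measurableSet_Iio) measurable_const
      (Measurable.ite (hXm (measurableSet_singleton q)) measurable_const measurable_const)
  · intro ω
    dsimp only
    split_ifs with h1 h2
    · exact ⟨zero_le_one, le_rfl⟩
    · exact ⟨hc0, hc1⟩
    · exact ⟨le_rfl, zero_le_one⟩
  · have hfeq : (fun ω => if X ω < q then (1:ℝ) else if X ω = q then c else 0)
        = fun ω => Set.indicator {ω | X ω < q} (fun _ => (1:ℝ)) ω
            + Set.indicator {ω | X ω = q} (fun _ => c) ω := by
      funext ω
      simp only [Set.indicator_apply, mem_setOf_eq]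
      by_cases h1 : X ω < q
      · rw [if_pos h1, if_pos h1, if_neg h1.ne, add_zero]
      · rw [if_neg h1, if_neg h1, zero_add]
    have hms1 : MeasurableSet {ω | X ω < q} := hXm measurableSet_Iio
    have hms2 : MeasurableSet {ω | X ω = q} := hXm (measurableSet_singleton q)
    rw [hfeq, integral_add ((integrable_const (1:ℝ)).indicator hms1)
      ((integrable_const c).indicator hms2),
      integral_indicator_const (1:ℝ) hms1,
      integral_indicator_const c hms2, smul_eq_mul, smul_eq_mul, measureReal_def, measureReal_def, ← ha, ← hm]
    nlinarith [hacm]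
  · intro ω
    dsimp only
    by_cases h1 : X ω < q
    · rw [if_pos h1, max_eq_left (by linarith : (0:ℝ) ≤ q - X ω)]
      ring
    · rw [if_neg h1]
      by_cases h2 : X ω = q
      · rw [if_pos h2, h2, sub_self, max_self]
        ring
      · rw [if_neg h2, max_eq_right (by push_neg at h1; linarith [lt_of_le_of_ne h1 (Ne.symm h2)] : q - X ω ≤ 0)]
        ring

lemma main_meas {Y : Ω → ℝ} (hYm : Measurable Y) (hX : Integrable X μ) (hY : Integrable Y μ)
    {α : ℝ} (hα : α ∈ Ioo (0:ℝ) 1) :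
    (∫ p in Ioc (0:ℝ) α, qf' μ X p) + (∫ p in Ioc (0:ℝ) α, qf' μ Y p)
      ≤ ∫ p in Ioc (0:ℝ) α, qf' μ (X + Y) p := by
  have hZm : Measurable (X + Y) := hXm.add hYm
  have hZ : Integrable (X + Y) μ := hX.add hY
  obtain ⟨g, hgm, hg, hgavg, hgpt⟩ := exists_g (μ:=μ) (X:=X+Y) hZm hα
  have hg_int : Integrable g μ := integrable_g hgm hg
  have hmax_int : Integrable (fun ω => max (qf μ (X+Y) α - (X+Y) ω) 0) μ := by
    simpa using ((integrable_const (qf μ (X+Y) α)).sub hZ).pos_part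
  have hZg : ∫ ω, (X + Y) ω * g ω ∂μ = ∫ p in Ioc (0:ℝ) α, qf' μ (X+Y) p := by
    rw [Key2 hZm hZ hα, integral_congr_ae (ae_of_all _ hgpt),
      integral_sub (hg_int.const_mul _) hmax_int, integral_const_mul, hgavg]
  calc (∫ p in Ioc (0:ℝ) α, qf' μ X p) + (∫ p in Ioc (0:ℝ) α, qf' μ Y p)
      ≤ (∫ ω, X ω * g ω ∂μ) + ∫ ω, Y ω * g ω ∂μ :=
        add_le_add (key_ineq hXm hX hα hgm hg hgavg) (key_ineq hYm hY hα hgm hg hgavg)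
    _ = ∫ ω, (X + Y) ω * g ω ∂μ := by
        rw [← integral_add (integrable_mul_g hX hgm hg) (integrable_mul_g hY hgm hg)]
        apply integral_congr_ae
        apply ae_of_all
        intro ω
        simp only [Pi.add_apply]
        ring
    _ = ∫ p in Ioc (0:ℝ) α, qf' μ (X+Y) p := hZg

lemma int_qf_eq_qf' {α : ℝ} (hα0 : 0 < α) (hα1 : α ≤ 1) :
    ∫ p in Ioc (0:ℝ) α, qf μ X p = ∫ p in Ioc (0:ℝ) α, qf' μ X p := by
  rw [setIntegral_congr_set (Ioo_ae_eq_Ioc (a := (0:ℝ)) (b := α)).symm,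
    setIntegral_congr_set (μ := volume) (f := fun p => qf' μ X p)
      (Ioo_ae_eq_Ioc (a := (0:ℝ)) (b := α)).symm]
  apply setIntegral_congr_fun measurableSet_Ioo
  intro p hp
  exact (qf'_eq_qf hXm ⟨hp.1, lt_of_lt_of_le hp.2 hα1⟩).symm

omit hXm in
lemma qf_congr {W : Ω → ℝ} (h : X =ᵐ[μ] W) : qf μ X = qf μ W := by
  funext p
  unfold qf
  congr 1
  ext x
  have hm : μ {ω | X ω ≤ x} = μ {ω | W ω ≤ x} := by
    apply measure_congr
    filter_upwards [h] with ω hω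
    show (X ω ≤ x) = (W ω ≤ x)
    rw [hω]
  rw [Set.mem_setOf_eq, Set.mem_setOf_eq, hm]

end ESAux

open ESAux
theorem ES_subadditive {Ω : Type*} [MeasurableSpace Ω] (μ : Measure Ω)
    [IsProbabilityMeasure μ] (X Y : Ω → ℝ)
    (hX : Integrable X μ) (hY : Integrable Y μ)
    (α : ℝ) (hα : α ∈ Set.Ioc (0:ℝ) 1) :
    ES μ (X + Y) α ≤ ES μ X α + ES μ Y α := by
  obtain ⟨hα0, hα1⟩ := hα
  set X' := hX.1.mk X with hX'def
  set Y' := hY.1.mk Y with hY'def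
  have hX'm : Measurable X' := hX.1.stronglyMeasurable_mk.measurable
  have hY'm : Measurable Y' := hY.1.stronglyMeasurable_mk.measurable
  have hXae : X =ᵐ[μ] X' := hX.1.ae_eq_mk
  have hYae : Y =ᵐ[μ] Y' := hY.1.ae_eq_mk
  have hX' : Integrable X' μ := hX.congr hXae
  have hY' : Integrable Y' μ := hY.congr hYae
  have hZae : (X + Y) =ᵐ[μ] (X' + Y') := hXae.add hYae
  simp only [ES]
  rw [qf_congr hXae, qf_congr hYae, qf_congr hZae,
    int_qf_eq_qf' hX'm hα0 hα1, int_qf_eq_qf' hY'm hα0 hα1,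
    int_qf_eq_qf' (X := X' + Y') (hX'm.add hY'm) hα0 hα1]
  rcases lt_or_eq_of_le hα1 with h1 | h1
  · have key := main_meas hX'm hY'm hX' hY' ⟨hα0, h1⟩
    have hpos : (0:ℝ) < 1/α := by positivity
    nlinarith [key]
  · subst h1
    rw [Key1 hX'm hX', Key1 hY'm hY', Key1 (X := X' + Y') (hX'm.add hY'm) (hX'.add hY')]
    have hadd : ∫ ω, (X' + Y') ω ∂μ = (∫ ω, X' ω ∂μ) + ∫ ω, Y' ω ∂μ := by
      rw [← integral_add hX' hY']
      simp [Pi.add_apply]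
    rw [hadd]
    ring_nf
    linarith
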